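/- arXiv:1504.00645 — 2 statements merged into one kernel-verified Lean document; each statement's English description precedes it below -/
import Mathlib

section
/- Let n ≥ 3 be an integer with τ(n) + σ(n) < 2(n + 1). Then the permutability graph of subgroups Γ(D_n) of the dihedral group D_n is not Hamiltonian. -/
open scoped Pointwise

/-- The permutability graph of non-normal subgroups `Γ_N(G)`: vertices are the
non-normal (hence proper) subgroups of `G`, and two distinct vertices are adjacent
iff the corresponding subgroups permute, i.e. `HK = KH` as subsets of `G`. -/
def permGraphN (G : Type*) [Group G] :
    SimpleGraph {H : Subgroup G // ¬ H.Normal} where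
  Adj H K := H ≠ K ∧ (H.1 : Set G) * (K.1 : Set G) = (K.1 : Set G) * (H.1 : Set G)
  symm := ⟨fun _ _ ⟨hne, h⟩ => ⟨hne.symm, h.symm⟩⟩
  loopless := ⟨fun _ ⟨hne, _⟩ => hne rfl⟩

/-- The permutability graph of subgroups `Γ(G)`: vertices are the proper nontrivial
subgroups of `G`, and two distinct vertices are adjacent iff the corresponding
subgroups permute, i.e. `HK = KH` as subsets of `G`. -/
def permGraph (G : Type*) [Group G] :
    SimpleGraph {H : Subgroup G // H ≠ ⊥ ∧ H ≠ ⊤} where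
  Adj H K := H ≠ K ∧ (H.1 : Set G) * (K.1 : Set G) = (K.1 : Set G) * (H.1 : Set G)
  symm := ⟨fun _ _ ⟨hne, h⟩ => ⟨hne.symm, h.symm⟩⟩
  loopless := ⟨fun _ ⟨hne, _⟩ => hne rfl⟩

namespace Stmt16Aux

open DihedralGroup

/-! ### Combinatorial part: a necessary condition for Hamiltonicity -/

/-- Along a walk whose start has color `c` and whose end does not, some dart
exits the color class of `c`. -/
lemma exists_bad_dart {V : Type*} {C : Type*} {G : SimpleGraph V} (f : V → Option C) :
    ∀ {x y : V} (q : G.Walk x y) (c : C), f x = some c → f y ≠ some c →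
      ∃ d ∈ q.darts, f d.toProd.1 = some c ∧ f d.toProd.2 ≠ some c := by
  intro x y q
  induction q with
  | nil => exact fun c h1 h2 => absurd h1 h2
  | @cons u v w huv q ih =>
    intro c h1 h2
    by_cases hb : f v = some c
    · obtain ⟨d, hd, h3, h4⟩ := ih c hb h2
      exact ⟨d, List.mem_cons_of_mem _ hd, h3, h4⟩
    · exact ⟨⟨(u, v), huv⟩, List.mem_cons_self, h1, hb⟩

/-- If the vertices of a graph are partially colored in such a way that adjacent
colored vertices always get the same color, every color is used, and the number of
uncolored vertices is smaller than the number `m ≥ 2` of colors, then the graph is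
not Hamiltonian. -/
lemma not_ham {V : Type*} [Fintype V] [DecidableEq V] {G : SimpleGraph V}
    {m : ℕ} [NeZero m] (f : V → Option (ZMod m))
    (hadj : ∀ v w : V, G.Adj v w → ∀ c c' : ZMod m, f v = some c → f w = some c' → c = c')
    (g : ZMod m → V) (hg : ∀ c, f (g c) = some c) (hm : 2 ≤ m)
    (hcard : Nat.card {v : V // f v = none} < m) :
    ¬ G.IsHamiltonian := by
  intro hham
  have hginj : Function.Injective g := by
    intro a b hab
    have h1 := hg a
    rw [hab, hg b] at h1
    exact (Option.some_injective _ h1).symm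
  have hmcard : Fintype.card (ZMod m) = m := ZMod.card m
  have hVcard : m ≤ Fintype.card V := by
    rw [← hmcard]; exact Fintype.card_le_of_injective g hginj
  obtain ⟨a, p, hp⟩ := hham (by omega)
  have hnotnil : ¬ p.Nil := hp.isCycle.not_nil
  have hnodup : (p.darts.map (fun d => d.toProd.2)).Nodup := by
    rw [SimpleGraph.Walk.map_snd_darts, ← SimpleGraph.Walk.support_tail_of_not_nil p hnotnil]
    exact List.nodup_iff_count_le_one.2 fun a => le_of_eq (hp.isHamiltonian_tail a)
  have key : ∀ c : ZMod m, ∃ d : G.Dart,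
      d ∈ p.darts ∧ f d.toProd.1 = some c ∧ f d.toProd.2 = none := by
    intro c
    obtain ⟨c', hcc⟩ := Fintype.exists_ne_of_one_lt_card (by omega) c
    have hv : g c ∈ p.support := hp.mem_support (g c)
    have hw : g c' ∈ (p.rotate _ hv).support := by
      have h1 : g c' ∈ p.support.tail := by
        rw [← SimpleGraph.Walk.support_tail_of_not_nil p hnotnil]
        exact List.count_pos_iff.1 (by rw [hp.isHamiltonian_tail (g c')]; omega)
      exact List.mem_of_mem_tail ((SimpleGraph.Walk.support_rotate p _ hv).mem_iff.2 h1)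
    obtain ⟨d, hd, h3, h4⟩ := exists_bad_dart f ((p.rotate _ hv).takeUntil _ hw) c (hg c)
      (by rw [hg c']; exact fun hh => hcc (Option.some_injective _ hh))
    have hdp : d ∈ p.darts :=
      (SimpleGraph.Walk.rotate_darts p _ hv).mem_iff.1
        (SimpleGraph.Walk.darts_takeUntil_subset _ hw hd)
    refine ⟨d, hdp, h3, ?_⟩
    rcases hfd : f d.toProd.2 with _ | c''
    · rfl
    · exact absurd (hfd.trans (congrArg some (hadj _ _ d.adj c c'' h3 hfd).symm)) h4
  choose D hD1 hD2 hD3 using key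
  have hφ : Function.Injective (fun c => (⟨(D c).toProd.2, hD3 c⟩ : {v : V // f v = none})) := by
    intro c1 c2 h12
    have hD : D c1 = D c2 :=
      List.inj_on_of_nodup_map hnodup (hD1 c1) (hD1 c2) (congrArg Subtype.val h12)
    have h5 := hD2 c1
    rw [hD, hD2 c2] at h5
    exact Option.some_injective _ h5.symm
  have : m ≤ Nat.card {v : V // f v = none} := by
    have h6 := Nat.card_le_card_of_injective _ hφ
    rwa [Nat.card_eq_fintype_card (α := ZMod m), hmcard] at h6
  omega

/-! ### Group-theoretic part: subgroups of the dihedral group -/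

variable {n : ℕ}

/-- The additive subgroup of rotation indices of a subgroup of `D_n`. -/
def rotSub (H : Subgroup (DihedralGroup n)) : AddSubgroup (ZMod n) where
  carrier := {j | r j ∈ H}
  zero_mem' := by
    show r 0 ∈ H
    rw [← one_def]; exact H.one_mem
  add_mem' := by
    intro a b ha hb
    simpa using H.mul_mem ha hb
  neg_mem' := by
    intro a ha
    have h1 : (r a)⁻¹ = (r (-a) : DihedralGroup n) := by
      apply inv_eq_of_mul_eq_one_right
      rw [r_mul_r, add_neg_cancel, one_def]
    have h2 := H.inv_mem ha
    rwa [h1] at h2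

@[simp] lemma mem_rotSub {H : Subgroup (DihedralGroup n)} {j : ZMod n} :
    j ∈ rotSub H ↔ r j ∈ H := Iff.rfl

lemma intCast_mem_zmultiples [NeZero n] (d : ℕ) {z : ℤ} (hz : (d : ℤ) ∣ z) :
    ((z : ZMod n)) ∈ AddSubgroup.zmultiples ((d : ZMod n)) := by
  obtain ⟨t, rfl⟩ := hz
  refine AddSubgroup.mem_zmultiples_iff.2 ⟨t, ?_⟩
  rw [zsmul_eq_mul]
  push_cast
  ring

lemma dvd_val_of_mem_zmultiples [NeZero n] {d : ℕ} (hd : d ∣ n) {x : ZMod n}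
    (hx : x ∈ AddSubgroup.zmultiples ((d : ZMod n))) : d ∣ x.val := by
  obtain ⟨t, ht⟩ := AddSubgroup.mem_zmultiples_iff.1 hx
  have hx2 : x = ((t : ZMod n)) * (d : ZMod n) := by rw [← ht, zsmul_eq_mul]
  have hdval : d ∣ ((d : ZMod n)).val := by
    rcases lt_or_eq_of_le (Nat.le_of_dvd (Nat.pos_of_ne_zero (NeZero.ne n)) hd) with h | h
    · rw [ZMod.val_cast_of_lt h]
    · rw [h, ZMod.natCast_self]; simp
  rw [hx2, ZMod.val_mul]
  exact (Nat.dvd_mod_iff hd).2 (Dvd.dvd.mul_left hdval _)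

/-- Every additive subgroup of `ZMod n` consists of the multiples of a divisor of `n`. -/
lemma addSubgroup_eq_zmultiples [NeZero n] (N : AddSubgroup (ZMod n)) :
    N = AddSubgroup.zmultiples (((n / Nat.card N : ℕ) : ZMod n)) := by
  have hk : Nat.card N ∣ n := by
    have h1 := AddSubgroup.card_addSubgroup_dvd_card N
    rwa [Nat.card_zmod] at h1
  set k := Nat.card N with hkdef
  have hk0 : k ≠ 0 := Nat.card_ne_zero.2 ⟨⟨0, N.zero_mem⟩, inferInstance⟩
  have hd : (n / k) ∣ n := Nat.div_dvd_of_dvd hk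
  have hle : N ≤ AddSubgroup.zmultiples (((n / k : ℕ) : ZMod n)) := by
    intro x hx
    have hxk : k • x = 0 := by
      have h2 : k • (⟨x, hx⟩ : N) = 0 := card_nsmul_eq_zero'
      have h3 := congrArg Subtype.val h2
      simpa using h3
    have h4 : ((k * x.val : ℕ) : ZMod n) = 0 := by
      push_cast
      rw [ZMod.natCast_zmod_val, ← nsmul_eq_mul, hxk]
    rw [ZMod.natCast_eq_zero_iff] at h4
    -- n ∣ k * x.val, and n = k * (n / k), so (n/k) ∣ x.val
    have h5 : k * (n / k) ∣ k * x.val := by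
      rwa [Nat.mul_div_cancel' hk]
    have h6 : (n / k) ∣ x.val := (mul_dvd_mul_iff_left (by exact_mod_cast hk0)).1 h5
    have h7 : ((x.val : ℤ)) = ((n/k : ℕ) : ℤ) * ((x.val / (n/k) : ℕ) : ℤ) := by
      exact_mod_cast (Nat.mul_div_cancel' h6).symm
    have h8 := intCast_mem_zmultiples (n := n) (n / k) ⟨((x.val / (n/k) : ℕ) : ℤ), h7⟩
    rwa [Int.cast_natCast, ZMod.natCast_zmod_val] at h8
  have hcard : Nat.card (AddSubgroup.zmultiples (((n / k : ℕ) : ZMod n))) = k := by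
    rw [Nat.card_zmultiples, ZMod.addOrderOf_coe _ (NeZero.ne n),
      Nat.gcd_eq_right hd, Nat.div_div_self hk (NeZero.ne n)]
  apply le_antisymm hle
  intro x hx
  have hsub : (N : Set (ZMod n)) ⊆
      ((AddSubgroup.zmultiples (((n / k : ℕ) : ZMod n)) : AddSubgroup (ZMod n)) : Set (ZMod n)) :=
    hle
  have hfin : ((AddSubgroup.zmultiples (((n / k : ℕ) : ZMod n)) : AddSubgroup (ZMod n)) :
      Set (ZMod n)).Finite := Set.toFinite _
  have hcard2 : ((AddSubgroup.zmultiples (((n / k : ℕ) : ZMod n)) : AddSubgroup (ZMod n)) :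
      Set (ZMod n)).ncard ≤ (N : Set (ZMod n)).ncard := by
    rw [← Nat.card_coe_set_eq, ← Nat.card_coe_set_eq]
    have e1 : Nat.card ((N : Set (ZMod n))) = k := hkdef.symm
    have e2 : Nat.card ((AddSubgroup.zmultiples (((n / k : ℕ) : ZMod n)) :
        AddSubgroup (ZMod n)) : Set (ZMod n)) = k := hcard
    omega
  have h9 := Set.eq_of_subset_of_ncard_le hsub hcard2 hfin
  have hNe : N = AddSubgroup.zmultiples (((n / k : ℕ) : ZMod n)) := SetLike.coe_injective h9
  rw [hNe]
  exact hx

lemma sr_mem_iff {H : Subgroup (DihedralGroup n)} {i : ZMod n}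
    (hi : sr i ∈ H) (j : ZMod n) : sr j ∈ H ↔ j - i ∈ rotSub H := by
  constructor
  · intro hj
    have h1 := H.mul_mem hi hj
    rw [sr_mul_sr] at h1
    exact h1
  · intro hj
    have h2 : r (i - j) ∈ H := by
      have := (rotSub H).neg_mem hj
      rwa [neg_sub] at this
    have h3 := H.mul_mem h2 hi
    rw [r_mul_sr, sub_sub_cancel] at h3
    exact h3

lemma coe_mul_self (G : Type*) [Group G] (H : Subgroup G) : (H : Set G) * (H : Set G) = H := by
  have := Submonoid.coe_mul_self_eq H.toSubmonoid
  simpa using this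

/-- The key algebraic fact: if `H` and `K` permute, contain reflections `sr i`, `sr j`
respectively, and all their rotations have index divisible by `m` (odd), then
`i ≡ j (mod m)`. -/
lemma key_adj {m : ℕ} [NeZero n] [NeZero m] (hmn : m ∣ n) (hodd : ¬ 2 ∣ m)
    {H K : Subgroup (DihedralGroup n)}
    (hcomm : (H : Set (DihedralGroup n)) * (K : Set (DihedralGroup n)) =
      (K : Set (DihedralGroup n)) * (H : Set (DihedralGroup n)))
    {i j : ZMod n} (hi : sr i ∈ H) (hj : sr j ∈ K)
    (hH : ∀ x : ZMod n, r x ∈ H → ZMod.castHom hmn (ZMod m) x = 0)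
    (hK : ∀ x : ZMod n, r x ∈ K → ZMod.castHom hmn (ZMod m) x = 0) :
    ZMod.castHom hmn (ZMod m) i = ZMod.castHom hmn (ZMod m) j := by
  set φ := ZMod.castHom hmn (ZMod m) with hφ
  have h1 : (sr i : DihedralGroup n) * sr j ∈
      (H : Set (DihedralGroup n)) * (K : Set (DihedralGroup n)) :=
    Set.mul_mem_mul hi hj
  rw [sr_mul_sr] at h1
  have hsq : ((H : Set (DihedralGroup n)) * (K : Set (DihedralGroup n))) *
      ((H : Set (DihedralGroup n)) * (K : Set (DihedralGroup n))) =
      (H : Set (DihedralGroup n)) * (K : Set (DihedralGroup n)) := by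
    calc ((H : Set (DihedralGroup n)) * K) * ((H : Set (DihedralGroup n)) * K)
        = (H : Set (DihedralGroup n)) * ((K : Set (DihedralGroup n)) * H) * K := by
          rw [mul_assoc, mul_assoc, mul_assoc]
      _ = (H : Set (DihedralGroup n)) * ((H : Set (DihedralGroup n)) * K) * K := by
          rw [hcomm]
      _ = ((H : Set (DihedralGroup n)) * H) * ((K : Set (DihedralGroup n)) * K) := by
          rw [mul_assoc, mul_assoc, mul_assoc]
      _ = (H : Set (DihedralGroup n)) * K := by
          rw [coe_mul_self, coe_mul_self]
  have h2 : (r (j - i) : DihedralGroup n) * r (j - i) ∈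
      (H : Set (DihedralGroup n)) * (K : Set (DihedralGroup n)) := by
    rw [← hsq]
    exact Set.mul_mem_mul h1 h1
  rw [r_mul_r] at h2
  obtain ⟨g1, hg1, g2, hg2, hprod⟩ := Set.mem_mul.1 h2
  have h2unit : IsUnit (2 : ZMod m) := by
    have := (ZMod.isUnit_iff_coprime 2 m).2
      ((Nat.Prime.coprime_iff_not_dvd Nat.prime_two).2 hodd)
    simpa using this
  cases g1 with
  | r a =>
    cases g2 with
    | r b =>
      rw [r_mul_r] at hprod
      have hab : a + b = j - i + (j - i) := by
        injection hprod
      have h5 : φ a + φ b = (φ j - φ i) + (φ j - φ i) := by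
        have h5' := congrArg φ hab
        rw [map_add, map_add, map_sub] at h5'
        exact h5'
      rw [hH a hg1, hK b hg2] at h5
      have h6 : (2 : ZMod m) * (φ j - φ i) = 0 := by
        rw [two_mul]
        linear_combination -h5
      have h7 : φ j - φ i = 0 :=
        h2unit.mul_left_cancel (by rw [h6, mul_zero])
      exact (sub_eq_zero.mp h7).symm
    | sr b =>
      rw [r_mul_sr] at hprod
      exact absurd hprod (by simp)
  | sr a =>
    cases g2 with
    | r b =>
      rw [sr_mul_r] at hprod
      exact absurd hprod (by simp)
    | sr b =>
      rw [sr_mul_sr] at hprod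
      have hab : b - a = j - i + (j - i) := by
        injection hprod
      have ha : φ a = φ i := by
        have h8 := H.mul_mem hi (show sr a ∈ H from hg1)
        rw [sr_mul_sr] at h8
        have h9 := hH _ h8
        rw [map_sub] at h9
        linear_combination h9
      have hb : φ b = φ j := by
        have h8 := K.mul_mem hj (show sr b ∈ K from hg2)
        rw [sr_mul_sr] at h8
        have h9 := hK _ h8
        rw [map_sub] at h9
        linear_combination h9
      have h5 : φ b - φ a = (φ j - φ i) + (φ j - φ i) := by
        have h5' := congrArg φ hab
        rw [map_sub, map_add, map_sub] at h5'
        exact h5'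
      rw [ha, hb] at h5
      have h7 : φ j - φ i = 0 := by linear_combination -h5
      exact (sub_eq_zero.mp h7).symm

/-- The coloring function on subgroups of `D_n`. -/
noncomputable def colorFn (m : ℕ) [NeZero n] [NeZero m] (hmn : m ∣ n)
    (H : Subgroup (DihedralGroup n)) : Option (ZMod m) :=
  letI : Decidable ((∃ i : ZMod n, sr i ∈ H) ∧
      ∀ x : ZMod n, r x ∈ H → ZMod.castHom hmn (ZMod m) x = 0) := Classical.dec _
  if h : (∃ i : ZMod n, sr i ∈ H) ∧
      ∀ x : ZMod n, r x ∈ H → ZMod.castHom hmn (ZMod m) x = 0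
  then some (ZMod.castHom hmn (ZMod m) (Classical.choose h.1)) else none

lemma colorFn_adj {m : ℕ} [NeZero n] [NeZero m] (hmn : m ∣ n) (hodd : ¬ 2 ∣ m)
    {H K : Subgroup (DihedralGroup n)}
    (hcomm : (H : Set (DihedralGroup n)) * (K : Set (DihedralGroup n)) =
      (K : Set (DihedralGroup n)) * (H : Set (DihedralGroup n)))
    {c c' : ZMod m} (hc : colorFn m hmn H = some c) (hc' : colorFn m hmn K = some c') :
    c = c' := by
  unfold colorFn at hc hc'
  split at hc
  case isFalse => exact absurd hc (by simp)
  case isTrue h =>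
    split at hc'
    case isFalse => exact absurd hc' (by simp)
    case isTrue h' =>
      have e1 := key_adj hmn hodd hcomm (Classical.choose_spec h.1)
        (Classical.choose_spec h'.1) h.2 h'.2
      rw [Option.some_inj] at hc hc'
      rw [← hc, ← hc', e1]

lemma colorFn_none {m : ℕ} [NeZero n] [NeZero m] {hmn : m ∣ n}
    {H : Subgroup (DihedralGroup n)} (hc : colorFn m hmn H = none) :
    ¬ ((∃ i : ZMod n, sr i ∈ H) ∧
      ∀ x : ZMod n, r x ∈ H → ZMod.castHom hmn (ZMod m) x = 0) := by
  intro hcond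
  unfold colorFn at hc
  rw [dif_pos hcond] at hc
  exact absurd hc (by simp)

/-- The order-2 subgroup generated by the reflection `sr x`. -/
def reflSub [NeZero n] (x : ZMod n) : Subgroup (DihedralGroup n) where
  carrier := {1, sr x}
  one_mem' := Or.inl rfl
  mul_mem' := by
    rintro a b (rfl | rfl) (rfl | rfl)
    · exact Or.inl (one_mul 1)
    · rw [one_mul]; exact Or.inr rfl
    · rw [mul_one]; exact Or.inr rfl
    · rw [sr_mul_sr, sub_self, ← one_def]; exact Or.inl rfl
  inv_mem' := by
    rintro a (rfl | rfl)
    · rw [inv_one]; exact Or.inl rfl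
    · have : (sr x : DihedralGroup n)⁻¹ = sr x :=
        inv_eq_of_mul_eq_one_right (sr_mul_self x)
      rw [this]; exact Or.inr rfl

lemma r_inj {g1 g2 : ZMod n} (h : (r g1 : DihedralGroup n) = r g2) : g1 = g2 := by
  injection h

lemma mem_reflSub_iff [NeZero n] {x : ZMod n} {g : DihedralGroup n} :
    g ∈ reflSub x ↔ g = 1 ∨ g = sr x := Iff.rfl

lemma reflSub_ne_bot [NeZero n] (x : ZMod n) : reflSub x ≠ ⊥ := by
  intro hb
  have h1 : sr x ∈ reflSub x := Or.inr rfl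
  rw [hb, Subgroup.mem_bot, one_def] at h1
  exact absurd h1 (by intro h; cases h)

lemma reflSub_ne_top [NeZero n] (hn : 2 ≤ n) (x : ZMod n) : reflSub x ≠ ⊤ := by
  intro ht
  have h1 : (r 1 : DihedralGroup n) ∈ reflSub x := ht ▸ Subgroup.mem_top _
  rcases h1 with h1 | h1
  · rw [one_def] at h1
    have h2 : (1 : ZMod n) = 0 := r_inj h1
    rw [show ((1 : ZMod n)) = ((1 : ℕ) : ZMod n) by simp,
      ZMod.natCast_eq_zero_iff] at h2
    have := Nat.le_of_dvd one_pos h2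
    omega
  · exact absurd h1 (by simp)


lemma colorFn_reflSub {m : ℕ} [NeZero n] [NeZero m] (hmn : m ∣ n) (c : ZMod m) :
    colorFn m hmn (reflSub ((c.val : ZMod n))) = some c := by
  have hcond : (∃ i : ZMod n, sr i ∈ reflSub ((c.val : ZMod n))) ∧
      ∀ x : ZMod n, r x ∈ reflSub ((c.val : ZMod n)) →
        ZMod.castHom hmn (ZMod m) x = 0 := by
    constructor
    · exact ⟨_, Or.inr rfl⟩
    · intro x hx
      rcases hx with hx | hx
      · rw [one_def] at hx
        rw [r_inj hx]
        exact map_zero _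
      · exact absurd hx (by simp)
  unfold colorFn
  rw [dif_pos hcond]
  congr 1
  have hspec := Classical.choose_spec hcond.1
  rcases hspec with hs | hs
  · rw [one_def] at hs
    exact absurd hs (by intro h; cases h)
  · have h2 : Classical.choose hcond.1 = ((c.val : ℕ) : ZMod n) := by injection hs
    rw [h2, map_natCast, ZMod.natCast_zmod_val]


section Encoding

variable [NeZero n]

/-- The divisor of `n` attached to a subgroup: the index of its rotation part. -/
noncomputable def dIdx (H : Subgroup (DihedralGroup n)) : ℕ :=
  n / Nat.card (rotSub H)

lemma card_rotSub_dvd (H : Subgroup (DihedralGroup n)) : Nat.card (rotSub H) ∣ n := by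
  have h1 := AddSubgroup.card_addSubgroup_dvd_card (rotSub H)
  rwa [Nat.card_zmod] at h1

lemma rotSub_eq (H : Subgroup (DihedralGroup n)) :
    rotSub H = AddSubgroup.zmultiples ((dIdx H : ZMod n)) :=
  addSubgroup_eq_zmultiples _

lemma dIdx_dvd (H : Subgroup (DihedralGroup n)) : dIdx H ∣ n :=
  Nat.div_dvd_of_dvd (card_rotSub_dvd H)

lemma card_rotSub_pos (H : Subgroup (DihedralGroup n)) : 0 < Nat.card (rotSub H) :=
  Nat.card_pos

lemma dIdx_pos (H : Subgroup (DihedralGroup n)) : 0 < dIdx H :=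
  Nat.div_pos (Nat.le_of_dvd (Nat.pos_of_ne_zero (NeZero.ne n)) (card_rotSub_dvd H))
    (card_rotSub_pos H)

lemma dIdx_ne_n {H : Subgroup (DihedralGroup n)} (hb : H ≠ ⊥)
    (hnorefl : ∀ i : ZMod n, sr i ∉ H) : dIdx H ≠ n := by
  have hbot : rotSub H ≠ ⊥ := by
    obtain ⟨⟨g, hg⟩, hne⟩ := Subgroup.ne_bot_iff_exists_ne_one.1 hb
    have hne' : g ≠ 1 := fun hgg => hne (Subtype.ext hgg)
    cases g with
    | r j =>
      intro hNb
      have hj : j ∈ rotSub H := hg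
      rw [hNb, AddSubgroup.mem_bot] at hj
      rw [hj, ← one_def] at hne'
      exact hne' rfl
    | sr j => exact absurd hg (hnorefl j)
  have hlt : 1 < Nat.card (rotSub H) :=
    (AddSubgroup.one_lt_card_iff_ne_bot _).2 hbot
  have := Nat.div_lt_self (Nat.pos_of_ne_zero (NeZero.ne n)) hlt
  unfold dIdx
  omega

lemma dIdx_ne_one {H : Subgroup (DihedralGroup n)} (ht : H ≠ ⊤)
    (hrefl : ∃ i : ZMod n, sr i ∈ H) : dIdx H ≠ 1 := by
  intro h1
  have hk : Nat.card (rotSub H) = n := by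
    have h2 := Nat.div_mul_cancel (card_rotSub_dvd H)
    unfold dIdx at h1
    rw [h1, one_mul] at h2
    exact h2
  have hNtop : rotSub H = ⊤ := by
    apply AddSubgroup.eq_top_of_card_eq
    rw [hk, Nat.card_zmod]
  apply ht
  rw [Subgroup.eq_top_iff']
  intro g
  obtain ⟨i, hi⟩ := hrefl
  cases g with
  | r j =>
    have : j ∈ rotSub H := by rw [hNtop]; trivial
    exact this
  | sr j =>
    rw [sr_mem_iff hi j]
    rw [hNtop]; trivial

lemma castHom_eq_zero_of_m_dvd {m : ℕ} [NeZero m] (hmn : m ∣ n)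
    {H : Subgroup (DihedralGroup n)} (hmd : m ∣ dIdx H)
    {x : ZMod n} (hx : r x ∈ H) : ZMod.castHom hmn (ZMod m) x = 0 := by
  have hx2 : x ∈ AddSubgroup.zmultiples ((dIdx H : ZMod n)) := by
    rw [← rotSub_eq]; exact hx
  obtain ⟨t, ht⟩ := AddSubgroup.mem_zmultiples_iff.1 hx2
  have hx3 : x = ((t : ZMod n)) * ((dIdx H : ℕ) : ZMod n) := by rw [← ht, zsmul_eq_mul]
  rw [hx3, map_mul, map_natCast]
  have : ((dIdx H : ℕ) : ZMod m) = 0 := (ZMod.natCast_eq_zero_iff _ _).2 hmd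
  rw [this, mul_zero]

lemma subgroup_eq_of_data {H K : Subgroup (DihedralGroup n)}
    (hN : rotSub H = rotSub K)
    {i i' : ZMod n} (hi : sr i ∈ H) (hi' : sr i' ∈ K) (hdiff : i' - i ∈ rotSub H) :
    H = K := by
  ext g
  cases g with
  | r j =>
    constructor
    · intro hj
      have : j ∈ rotSub K := by rw [← hN]; exact hj
      exact this
    · intro hj
      have : j ∈ rotSub H := by rw [hN]; exact hj
      exact this
  | sr j =>
    rw [sr_mem_iff hi j, sr_mem_iff hi' j]
    have hdiff' : i' - i ∈ rotSub K := by rw [← hN]; exact hdiff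
    constructor
    · intro hm
      have h2 := AddSubgroup.sub_mem _ (hN ▸ hm) hdiff'
      have e : j - i - (i' - i) = j - i' := by ring
      rwa [e] at h2
    · intro hm
      have h2 := AddSubgroup.add_mem _ hm hdiff'
      have e : j - i' + (i' - i) = j - i := by ring
      rw [e] at h2
      rw [hN]
      exact h2

lemma subgroup_eq_of_data' {H K : Subgroup (DihedralGroup n)}
    (hN : rotSub H = rotSub K)
    (h1 : ∀ i : ZMod n, sr i ∉ H) (h2 : ∀ i : ZMod n, sr i ∉ K) : H = K := by
  ext g
  cases g with
  | r j =>
    constructor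
    · intro hj
      have : j ∈ rotSub K := by rw [← hN]; exact hj
      exact this
    · intro hj
      have : j ∈ rotSub H := by rw [hN]; exact hj
      exact this
  | sr j => exact ⟨fun hj => absurd hj (h1 j), fun hj => absurd hj (h2 j)⟩

/-- Encoding of a subgroup by numerical data. -/
noncomputable def enc (H : Subgroup (DihedralGroup n)) : ℕ ⊕ ℕ × ℕ :=
  letI : Decidable (∃ i : ZMod n, sr i ∈ H) := Classical.dec _
  if hex : ∃ i : ZMod n, sr i ∈ H then
    Sum.inr (dIdx H, (Classical.choose hex).val % dIdx H)
  else Sum.inl (dIdx H)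

lemma enc_inj {H K : Subgroup (DihedralGroup n)} (he : enc H = enc K) : H = K := by
  unfold enc at he
  by_cases hex1 : ∃ i : ZMod n, sr i ∈ H
  · by_cases hex2 : ∃ i : ZMod n, sr i ∈ K
    · rw [dif_pos hex1, dif_pos hex2] at he
      simp only [Sum.inr.injEq, Prod.mk.injEq] at he
      obtain ⟨hd, hj⟩ := he
      have hNK : rotSub K = AddSubgroup.zmultiples ((dIdx H : ZMod n)) := by
        rw [rotSub_eq K, hd]
      have hN : rotSub H = rotSub K := by rw [rotSub_eq H, hNK]
      rw [← hd] at hj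
      set i := Classical.choose hex1
      set i' := Classical.choose hex2
      have hmod : ((dIdx H : ℕ) : ℤ) ∣ ((i'.val : ℤ) - (i.val : ℤ)) := by
        have hmeq : i.val ≡ i'.val [MOD dIdx H] := hj
        exact (Nat.modEq_iff_dvd).1 hmeq
      have hmem := intCast_mem_zmultiples (n := n) (dIdx H) hmod
      have hcast : (((i'.val : ℤ) - (i.val : ℤ) : ℤ) : ZMod n) = i' - i := by
        push_cast
        rw [ZMod.natCast_zmod_val, ZMod.natCast_zmod_val]
      rw [hcast] at hmem
      have hdiff : i' - i ∈ rotSub H := by rw [rotSub_eq H]; exact hmem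
      exact subgroup_eq_of_data hN (Classical.choose_spec hex1)
        (Classical.choose_spec hex2) hdiff
    · rw [dif_pos hex1, dif_neg hex2] at he
      exact absurd he (by simp)
  · by_cases hex2 : ∃ i : ZMod n, sr i ∈ K
    · rw [dif_neg hex1, dif_pos hex2] at he
      exact absurd he (by simp)
    · rw [dif_neg hex1, dif_neg hex2] at he
      simp only [Sum.inl.injEq] at he
      have hN : rotSub H = rotSub K := by
        rw [rotSub_eq H, rotSub_eq K, he]
      push_neg at hex1 hex2
      exact subgroup_eq_of_data' hN hex1 hex2

lemma enc_mem {m : ℕ} [NeZero m] (hmn : m ∣ n) (hm1 : m ≠ 1)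
    {H : Subgroup (DihedralGroup n)} (hb : H ≠ ⊥) (ht : H ≠ ⊤)
    (hnone : colorFn m hmn H = none) :
    enc H ∈ ((n.divisors.erase n).image Sum.inl : Finset (ℕ ⊕ ℕ × ℕ)) ∪
      (n.divisors.filter (fun d => ¬ m ∣ d ∧ d ≠ 1)).biUnion
        (fun d => (Finset.range d).image (fun j => Sum.inr (d, j))) := by
  classical
  have hdmem : dIdx H ∈ n.divisors :=
    Nat.mem_divisors.2 ⟨dIdx_dvd H, NeZero.ne n⟩
  unfold enc
  by_cases hex : ∃ i : ZMod n, sr i ∈ H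
  · rw [dif_pos hex]
    apply Finset.mem_union_right
    rw [Finset.mem_biUnion]
    refine ⟨dIdx H, ?_, ?_⟩
    · rw [Finset.mem_filter]
      refine ⟨hdmem, ?_, dIdx_ne_one ht hex⟩
      intro hmd
      apply colorFn_none hnone
      exact ⟨hex, fun x hx => castHom_eq_zero_of_m_dvd hmn hmd hx⟩
    · rw [Finset.mem_image]
      exact ⟨_, Finset.mem_range.2 (Nat.mod_lt _ (dIdx_pos H)), rfl⟩
  · rw [dif_neg hex]
    apply Finset.mem_union_left
    rw [Finset.mem_image]
    push_neg at hex
    exact ⟨dIdx H, Finset.mem_erase.2 ⟨dIdx_ne_n hb hex, hdmem⟩, rfl⟩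

end Encoding

end Stmt16Aux


set_option maxHeartbeats 1000000 in
/-- if `n ≥ 3` and `τ(n) + σ(n) < 2(n+1)`, then `Γ(D_n)` is
not Hamiltonian. -/
theorem stmt_16 (n : ℕ) (hn : 3 ≤ n)
    (h : n.divisors.card + ∑ d ∈ n.divisors, d < 2 * (n + 1)) :
    haveI : NeZero n := ⟨by omega⟩
    haveI : DecidableEq {H : Subgroup (DihedralGroup n) // H ≠ ⊥ ∧ H ≠ ⊤} :=
      Classical.decEq _
    haveI : Fintype {H : Subgroup (DihedralGroup n) // H ≠ ⊥ ∧ H ≠ ⊤} :=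
      Fintype.ofFinite _
    ¬ (permGraph (DihedralGroup n)).IsHamiltonian := by
  haveI : NeZero n := ⟨by omega⟩
  intro hham
  classical
  set v2 := n.factorization 2 with hv2def
  set m := n / 2 ^ v2 with hmdef
  have hpvm : 2 ^ v2 * m = n := Nat.ordProj_mul_ordCompl_eq_self n 2
  have hn0 : n ≠ 0 := by omega
  have hmodd : ¬ 2 ∣ m := Nat.not_dvd_ordCompl Nat.prime_two hn0
  have hmdvd : m ∣ n := ⟨2 ^ v2, by rw [← hpvm]; ring⟩
  have hgeo : ∀ k : ℕ, (∑ i ∈ Finset.range k, 2 ^ i) + 1 = 2 ^ k := by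
    intro k
    induction k with
    | zero => simp
    | succ k ih => rw [Finset.sum_range_succ, pow_succ]; omega
  have hppow : ∀ k : ℕ, ((2 ^ k : ℕ).divisors.card = k + 1) ∧
      ((∑ d ∈ (2 ^ k : ℕ).divisors, d) + 1 = 2 ^ (k + 1)) := by
    intro k
    rw [Nat.divisors_prime_pow Nat.prime_two]
    constructor
    · rw [Finset.card_map, Finset.card_range]
    · rw [Finset.sum_map]
      simpa using hgeo (k + 1)
  have hm1 : m ≠ 1 := by
    intro hm1
    have hn2 : n = 2 ^ v2 := by rw [← hpvm, hm1, mul_one]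
    obtain ⟨hc, hs⟩ := hppow v2
    rw [← hn2] at hc hs
    have h2n : 2 ^ (v2 + 1) = 2 * n := by rw [hn2, pow_succ]; ring
    have hv2le : v2 < 2 := by omega
    have hnle : n ≤ 2 := by
      rw [hn2]
      calc 2 ^ v2 ≤ 2 ^ 1 := Nat.pow_le_pow_right (by norm_num) (by omega)
        _ = 2 := rfl
    omega
  have hm0 : m ≠ 0 := fun h0 => hmodd (h0 ▸ dvd_zero 2)
  have hm2 : 2 ≤ m := (Nat.two_le_iff m).2 ⟨hm0, hm1⟩
  haveI : NeZero m := ⟨hm0⟩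
  -- sum of divisors divisible by m
  have hMfilter : n.divisors.filter (fun d => m ∣ d) =
      (2 ^ v2 : ℕ).divisors.image (fun e => m * e) := by
    ext d
    simp only [Finset.mem_filter, Finset.mem_image, Nat.mem_divisors]
    constructor
    · rintro ⟨⟨hdn, -⟩, e, rfl⟩
      refine ⟨e, ⟨?_, (pow_pos (by norm_num : (0:ℕ) < 2) v2).ne'⟩, rfl⟩
      have h1 : m * e ∣ m * 2 ^ v2 := by
        rw [show m * 2 ^ v2 = n by rw [← hpvm]; ring]
        exact hdn
      exact (mul_dvd_mul_iff_left (by omega : m ≠ 0)).1 h1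
    · rintro ⟨e, ⟨he, -⟩, rfl⟩
      exact ⟨⟨by rw [show n = m * 2 ^ v2 by rw [← hpvm]; ring]; exact mul_dvd_mul_left m he, hn0⟩,
        dvd_mul_right m e⟩
  have hMsum : (∑ d ∈ n.divisors.filter (fun d => m ∣ d), d) + m = 2 * n := by
    rw [hMfilter, Finset.sum_image (fun a _ b _ hab =>
      Nat.eq_of_mul_eq_mul_left (by omega) hab)]
    have h1 := (hppow v2).2
    have h2 : m * ((∑ d ∈ (2 ^ v2 : ℕ).divisors, d) + 1) = m * 2 ^ (v2 + 1) := by rw [h1]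
    rw [Nat.mul_add, mul_one] at h2
    have h3 : m * 2 ^ (v2 + 1) = 2 * n := by rw [pow_succ, ← hpvm]; ring
    rw [← Finset.mul_sum]
    exact h2.trans h3
  have hsplit1 : (∑ d ∈ n.divisors.filter (fun d => m ∣ d), d) +
      (∑ d ∈ n.divisors.filter (fun d => ¬ m ∣ d), d) = ∑ d ∈ n.divisors, d :=
    Finset.sum_filter_add_sum_filter_not _ _ _
  have hsplit2 : (∑ d ∈ (n.divisors.filter (fun d => ¬ m ∣ d)).filter (fun d => d = 1), d) +
      (∑ d ∈ (n.divisors.filter (fun d => ¬ m ∣ d)).filter (fun d => ¬ d = 1), d) =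
      ∑ d ∈ n.divisors.filter (fun d => ¬ m ∣ d), d :=
    Finset.sum_filter_add_sum_filter_not _ _ _
  have hone : (n.divisors.filter (fun d => ¬ m ∣ d)).filter (fun d => d = 1) = {1} := by
    ext d
    simp only [Finset.mem_filter, Finset.mem_singleton, Nat.mem_divisors]
    constructor
    · rintro ⟨-, h1⟩; exact h1
    · rintro rfl
      exact ⟨⟨⟨one_dvd n, hn0⟩, fun hmd => hm1 (Nat.dvd_one.1 hmd)⟩, rfl⟩
  have hfilter_eq : (n.divisors.filter (fun d => ¬ m ∣ d)).filter (fun d => ¬ d = 1) =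
      n.divisors.filter (fun d => ¬ m ∣ d ∧ ¬ d = 1) := Finset.filter_filter _ _ _
  have hA : 1 + (∑ d ∈ n.divisors.filter (fun d => ¬ m ∣ d ∧ ¬ d = 1), d) =
      ∑ d ∈ n.divisors.filter (fun d => ¬ m ∣ d), d := by
    rw [← hsplit2, hone, hfilter_eq, Finset.sum_singleton]
  -- the target finset
  have hTgtcard : (((n.divisors.erase n).image Sum.inl : Finset (ℕ ⊕ ℕ × ℕ)) ∪
      (n.divisors.filter (fun d => ¬ m ∣ d ∧ ¬ d = 1)).biUnion
        (fun d => (Finset.range d).image (fun j => Sum.inr (d, j)))).card ≤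
      (n.divisors.card - 1) + ∑ d ∈ n.divisors.filter (fun d => ¬ m ∣ d ∧ ¬ d = 1), d := by
    refine le_trans (Finset.card_union_le _ _) (Nat.add_le_add ?_ ?_)
    · refine le_trans Finset.card_image_le ?_
      rw [Finset.card_erase_of_mem (Nat.mem_divisors_self n hn0)]
    · refine le_trans Finset.card_biUnion_le (Finset.sum_le_sum ?_)
      intro d _
      refine le_trans Finset.card_image_le ?_
      rw [Finset.card_range]
  -- bounding the number of uncolored vertices
  have hcount : Nat.card {v : {H : Subgroup (DihedralGroup n) // H ≠ ⊥ ∧ H ≠ ⊤} //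
      Stmt16Aux.colorFn m hmdvd v.1 = none} ≤
      (n.divisors.card - 1) + ∑ d ∈ n.divisors.filter (fun d => ¬ m ∣ d ∧ ¬ d = 1), d := by
    refine le_trans ?_ hTgtcard
    have hmem : ∀ v : {v : {H : Subgroup (DihedralGroup n) // H ≠ ⊥ ∧ H ≠ ⊤} //
        Stmt16Aux.colorFn m hmdvd v.1 = none},
        Stmt16Aux.enc v.1.1 ∈ (((n.divisors.erase n).image Sum.inl : Finset (ℕ ⊕ ℕ × ℕ)) ∪
          (n.divisors.filter (fun d => ¬ m ∣ d ∧ ¬ d = 1)).biUnion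
            (fun d => (Finset.range d).image (fun j => Sum.inr (d, j)))) := by
      intro v
      have h4 := Stmt16Aux.enc_mem hmdvd hm1 v.1.2.1 v.1.2.2 v.2
      convert h4 using 4
    have hinj : Function.Injective (fun v : {v : {H : Subgroup (DihedralGroup n) //
        H ≠ ⊥ ∧ H ≠ ⊤} // Stmt16Aux.colorFn m hmdvd v.1 = none} =>
        (⟨Stmt16Aux.enc v.1.1, hmem v⟩ : {x // x ∈ (((n.divisors.erase n).image Sum.inl :
          Finset (ℕ ⊕ ℕ × ℕ)) ∪
          (n.divisors.filter (fun d => ¬ m ∣ d ∧ ¬ d = 1)).biUnion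
            (fun d => (Finset.range d).image (fun j => Sum.inr (d, j))))})) := by
      intro a b hab
      have h1 : Stmt16Aux.enc a.1.1 = Stmt16Aux.enc b.1.1 := congrArg Subtype.val hab
      exact Subtype.ext (Subtype.ext (Stmt16Aux.enc_inj h1))
    refine le_trans (Nat.card_le_card_of_injective _ hinj) ?_
    rw [Nat.card_eq_fintype_card, Fintype.card_coe]
  have hτpos : 1 ≤ n.divisors.card := Finset.card_pos.2 ⟨n, Nat.mem_divisors_self n hn0⟩
  have hfinal : Nat.card {v : {H : Subgroup (DihedralGroup n) // H ≠ ⊥ ∧ H ≠ ⊤} //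
      Stmt16Aux.colorFn m hmdvd v.1 = none} < m := by omega
  exact @Stmt16Aux.not_ham {H : Subgroup (DihedralGroup n) // H ≠ ⊥ ∧ H ≠ ⊤}
    (Fintype.ofFinite _) (Classical.decEq _) (permGraph (DihedralGroup n)) m ⟨hm0⟩
    (fun v => Stmt16Aux.colorFn m hmdvd v.1)
    (fun v w (hvw : (permGraph (DihedralGroup n)).Adj v w) c c' hc hc' =>
      Stmt16Aux.colorFn_adj hmdvd hmodd (And.right hvw) hc hc')
    (fun c => ⟨Stmt16Aux.reflSub ((c.val : ZMod n)), Stmt16Aux.reflSub_ne_bot _,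
      Stmt16Aux.reflSub_ne_top (by omega) _⟩)
    (fun c => Stmt16Aux.colorFn_reflSub hmdvd c) hm2 hfinal hham
end

section
/- Let n ≥ 3 be an integer. Then the permutability graph of non-normal subgroups Γ_N(Q_n) of the generalized quaternion group Q_n is isomorphic (as a simple graph) to the permutability graph of non-normal subgroups Γ_N(D_n) of the dihedral group D_n. -/
open scoped Pointwise

open QuaternionGroup DihedralGroup

def qd (n : ℕ) : QuaternionGroup n →* DihedralGroup n :=
  MonoidHom.mk' (fun x => match x with
    | .a i => DihedralGroup.r (ZMod.castHom (dvd_mul_left n 2) (ZMod n) i)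
    | .xa i => DihedralGroup.sr (ZMod.castHom (dvd_mul_left n 2) (ZMod n) i)) (by
    rintro (i | i) (j | j) <;>
      simp only [a_mul_a, a_mul_xa, xa_mul_a, xa_mul_xa, r_mul_r, r_mul_sr, sr_mul_r,
        sr_mul_sr, map_add, map_sub, map_natCast, ZMod.natCast_self, zero_add])

lemma qd_a (n : ℕ) (i : ZMod (2*n)) :
    qd n (.a i) = DihedralGroup.r (ZMod.castHom (dvd_mul_left n 2) (ZMod n) i) := rfl
lemma qd_xa (n : ℕ) (i : ZMod (2*n)) :
    qd n (.xa i) = DihedralGroup.sr (ZMod.castHom (dvd_mul_left n 2) (ZMod n) i) := rfl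

lemma qd_surj (n : ℕ) [NeZero n] : Function.Surjective (qd n) := by
  rintro (j | j)
  · exact ⟨.a (j.val : ZMod (2*n)), by
      rw [qd_a, map_natCast, ZMod.natCast_rightInverse j]⟩
  · exact ⟨.xa (j.val : ZMod (2*n)), by
      rw [qd_xa, map_natCast, ZMod.natCast_rightInverse j]⟩

lemma qd_ker (n : ℕ) [NeZero n] (x : QuaternionGroup n) (hx : qd n x = 1) :
    x = 1 ∨ x = .a (n : ZMod (2*n)) := by
  have hn0 : 0 < n := Nat.pos_of_ne_zero (NeZero.ne n)
  obtain (i | i) := x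
  · rw [qd_a, DihedralGroup.one_def] at hx
    have h0 : (ZMod.castHom (dvd_mul_left n 2) (ZMod n) i) = 0 := DihedralGroup.r.inj hx
    have hval : ((i.val : ℕ) : ZMod n) = 0 := by
      rw [← map_natCast (ZMod.castHom (dvd_mul_left n 2) (ZMod n)),
        ZMod.natCast_rightInverse i, h0]
    obtain ⟨c, hc⟩ := (ZMod.natCast_eq_zero_iff _ _).mp hval
    have hlt : i.val < 2*n := ZMod.val_lt i
    have hc2 : c < 2 := by
      by_contra h
      push_neg at h
      have : n * 2 ≤ n * c := Nat.mul_le_mul_left n h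
      omega
    have hi : i = ((i.val : ℕ) : ZMod (2*n)) := (ZMod.natCast_rightInverse i).symm
    interval_cases c
    · left; rw [hi, hc]; simp
    · right; rw [hi, hc]; simp
  · rw [qd_xa, DihedralGroup.one_def] at hx
    exact absurd hx (by intro h; cases h)

lemma a_n_mem (n : ℕ) [NeZero n] (H : Subgroup (QuaternionGroup n)) (hH : ¬ H.Normal) :
    QuaternionGroup.a (n : ZMod (2*n)) ∈ H := by
  by_cases hx : ∃ i, QuaternionGroup.xa i ∈ H
  · obtain ⟨i, hi⟩ := hx
    have := H.mul_mem hi hi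
    rwa [xa_mul_xa, add_sub_cancel_right] at this
  · push_neg at hx
    refine absurd ⟨fun h hh g => ?_⟩ hH
    have h2n : ((n : ZMod (2*n))) * 2 = 0 := by
      have : ((2*n : ℕ) : ZMod (2*n)) = 0 := ZMod.natCast_self _
      push_cast at this
      linear_combination this
    obtain (i | i) := h
    · obtain (j | j) := g
      · have : QuaternionGroup.a j * QuaternionGroup.a i * (QuaternionGroup.a j)⁻¹
            = QuaternionGroup.a i := by
          show QuaternionGroup.a j * QuaternionGroup.a i * QuaternionGroup.a (-j) = _
          rw [a_mul_a, a_mul_a]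
          ring_nf
        rw [this]
        exact hh
      · have : QuaternionGroup.xa j * QuaternionGroup.a i * (QuaternionGroup.xa j)⁻¹
            = QuaternionGroup.a (-i) := by
          show QuaternionGroup.xa j * QuaternionGroup.a i * QuaternionGroup.xa ((n : ZMod (2*n)) + j) = _
          rw [xa_mul_a, xa_mul_xa]
          ring_nf
          rw [sub_eq_add_neg, add_comm]
          congr 1
          linear_combination h2n
        rw [this]
        have : QuaternionGroup.a (-i) = (QuaternionGroup.a i)⁻¹ := rfl
        rw [this]
        exact H.inv_mem hh
    · exact absurd hh (hx i)

variable {n : ℕ}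

lemma ker_le (H : Subgroup (QuaternionGroup n)) [NeZero n]
    (hH : QuaternionGroup.a (n : ZMod (2*n)) ∈ H) : (qd n).ker ≤ H := by
  intro x hx
  rcases qd_ker n x hx with h | h
  · rw [h]; exact H.one_mem
  · rw [h]; exact hH

lemma comap_map (H : Subgroup (QuaternionGroup n)) [NeZero n]
    (hH : QuaternionGroup.a (n : ZMod (2*n)) ∈ H) :
    Subgroup.comap (qd n) (Subgroup.map (qd n) H) = H := by
  rw [Subgroup.comap_map_eq]
  exact sup_eq_left.mpr (ker_le H hH)

lemma preim_mul (H K : Subgroup (QuaternionGroup n)) [NeZero n]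
    (hK : QuaternionGroup.a (n : ZMod (2*n)) ∈ K) :
    (qd n) ⁻¹' ((qd n) '' (H : Set _) * (qd n) '' (K : Set _)) = (H : Set _) * (K : Set _) := by
  ext x
  simp only [Set.mem_preimage]
  constructor
  · intro hx
    rw [← Set.image_mul] at hx
    obtain ⟨y, hy, hxy⟩ := hx
    have : qd n ((y⁻¹ * x)) = 1 := by rw [map_mul, map_inv, hxy, inv_mul_cancel]
    obtain ⟨h, hh, k, hk, hhk⟩ := hy
    rcases qd_ker n _ this with h1 | h1
    · have : x = y := by
        have := congrArg (y * ·) h1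
        simpa [mul_assoc] using this
      rw [this]
      exact ⟨h, hh, k, hk, hhk⟩
    · have hx' : x = y * QuaternionGroup.a (n : ZMod (2*n)) := by
        have := congrArg (y * ·) h1
        simpa [mul_assoc] using this
      refine ⟨h, hh, k * QuaternionGroup.a (n : ZMod (2*n)), K.mul_mem hk hK, ?_⟩
      show h * (k * QuaternionGroup.a (n : ZMod (2*n))) = x
      rw [← mul_assoc]
      show (fun x1 x2 => x1 * x2) h k * _ = x
      rw [hhk, ← hx']
  · intro hx
    rw [← Set.image_mul]
    exact Set.mem_image_of_mem _ hx

lemma perm_iff (H K : Subgroup (QuaternionGroup n)) [NeZero n]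
    (hH : QuaternionGroup.a (n : ZMod (2*n)) ∈ H)
    (hK : QuaternionGroup.a (n : ZMod (2*n)) ∈ K) :
    ((qd n) '' (H : Set (QuaternionGroup n)) * (qd n) '' (K : Set (QuaternionGroup n)) =
      (qd n) '' (K : Set (QuaternionGroup n)) * (qd n) '' (H : Set (QuaternionGroup n))) ↔
    ((H : Set (QuaternionGroup n)) * (K : Set (QuaternionGroup n)) =
      (K : Set (QuaternionGroup n)) * (H : Set (QuaternionGroup n))) := by
  constructor
  · intro h
    rw [← preim_mul H K hK, ← preim_mul K H hH, h]
  · intro h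
    have e1 := Set.image_mul (qd n) (s := (H : Set _)) (t := (K : Set _))
    have e2 := Set.image_mul (qd n) (s := (K : Set _)) (t := (H : Set _))
    rw [← e1, ← e2, h]

lemma nn_map (H : Subgroup (QuaternionGroup n)) [NeZero n] (hH : ¬ H.Normal) :
    ¬ (Subgroup.map (qd n) H).Normal := fun h =>
  hH (comap_map H (a_n_mem n H hH) ▸ h.comap (qd n))

lemma nn_comap (K : Subgroup (DihedralGroup n)) [NeZero n] (hK : ¬ K.Normal) :
    ¬ (Subgroup.comap (qd n) K).Normal := fun h =>
  hK (Subgroup.map_comap_eq_self_of_surjective (qd_surj n) K ▸ h.map (qd n) (qd_surj n))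


/-- for `n ≥ 3`, the permutability graph of non-normal subgroups
of the generalized quaternion group `Q_n` is isomorphic to that of the dihedral
group `D_n`. -/
theorem stmt_19 (n : ℕ) (hn : 3 ≤ n) :
    Nonempty (permGraphN (QuaternionGroup n) ≃g permGraphN (DihedralGroup n)) := by
  haveI : NeZero n := ⟨by omega⟩
  refine ⟨⟨⟨fun H => ⟨Subgroup.map (qd n) H.1, nn_map H.1 H.2⟩,
    fun K => ⟨Subgroup.comap (qd n) K.1, nn_comap K.1 K.2⟩, ?_, ?_⟩, ?_⟩⟩
  · intro H
    exact Subtype.ext (comap_map H.1 (a_n_mem n H.1 H.2))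
  · intro K
    exact Subtype.ext (Subgroup.map_comap_eq_self_of_surjective (qd_surj n) K.1)
  · intro H K
    simp only [Equiv.coe_fn_mk]
    unfold permGraphN
    show (_ ≠ _ ∧ _) ↔ (_ ≠ _ ∧ _)
    have hinj : ∀ (A B : {H : Subgroup (QuaternionGroup n) // ¬ H.Normal}),
        Subgroup.map (qd n) A.1 = Subgroup.map (qd n) B.1 → A = B := by
      intro A B h
      refine Subtype.ext ?_
      rw [← comap_map A.1 (a_n_mem n A.1 A.2), ← comap_map B.1 (a_n_mem n B.1 B.2), h]
    constructor
    · rintro ⟨hne, hperm⟩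
      refine ⟨fun h => hne (by rw [h]), ?_⟩
      rw [Subgroup.coe_map, Subgroup.coe_map] at hperm
      exact (perm_iff H.1 K.1 (a_n_mem n H.1 H.2) (a_n_mem n K.1 K.2)).mp hperm
    · rintro ⟨hne, hperm⟩
      refine ⟨fun h => hne (hinj H K (congrArg Subtype.val h)), ?_⟩
      rw [Subgroup.coe_map, Subgroup.coe_map]
      exact (perm_iff H.1 K.1 (a_n_mem n H.1 H.2) (a_n_mem n K.1 K.2)).mpr hperm
end
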